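/- C¹-regularity of the attractor boundary (uniqueness of the outward unit normal): for every t ∈ ℝ and every p ∈ frontier (A t), there exists exactly one n ∈ E with ‖n‖ = 1 such that ⟪n, y⟫ ≤ ⟪n, p⟫ for all y ∈ A t; i.e., each boundary point of the attractor fibre admits a unique supporting unit normal. -/

import Mathlib

open MeasureTheory Set Metric Pointwise
open scoped RealInnerProductSpace

noncomputable section

abbrev Euc (d : ℕ) : Type := EuclideanSpace ℝ (Fin d)

/-- The set of admissible controls: measurable functions with values in the closed unit ball. -/
def ctrlSet (d : ℕ) : Set (ℝ → Euc d) :=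
  {ξ | Measurable ξ ∧ ∀ s, ‖ξ s‖ ≤ 1}

/-- The attractor fibre at time `t`. -/
def Afib (d : ℕ) (Ψ : ℝ → ℝ → (Euc d →L[ℝ] Euc d)) (ρ t : ℝ) : Set (Euc d) :=
  {x | ∃ ξ ∈ ctrlSet d, x = ρ • ∫ s in Set.Iic t, Ψ t s (ξ s)}

/-- The reachable-set operator of the linear differential inclusion. -/
def reach (d : ℕ) (Ψ : ℝ → ℝ → (Euc d →L[ℝ] Euc d)) (ρ t t₀ : ℝ) (S : Set (Euc d)) :
    Set (Euc d) :=
  {y | ∃ x₀ ∈ S, ∃ ξ ∈ ctrlSet d, y = Ψ t t₀ x₀ + ρ • ∫ s in Set.Icc t₀ t, Ψ t s (ξ s)}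

/-- Integrability of the exponential bound on a left ray. -/
lemma expIic (γ t : ℝ) (hγ : 0 < γ) :
    IntegrableOn (fun s => Real.exp (-γ * (t - s))) (Iic t) := by
  have m : MeasurableEmbedding fun x : ℝ => -x := (Homeomorph.neg ℝ).measurableEmbedding
  rw [IntegrableOn, ← Measure.map_neg_eq_self (volume : Measure ℝ),
    ← IntegrableOn, m.integrableOn_map_iff]
  simp_rw [Function.comp_def, neg_preimage, neg_Iic]
  rw [integrableOn_Ici_iff_integrableOn_Ioi]
  have h : IntegrableOn (fun x => Real.exp (-γ * t) * Real.exp (-γ * x)) (Ioi (-t)) :=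
    (exp_neg_integrableOn_Ioi (-t) hγ).const_mul _
  refine h.congr_fun (fun x _ => ?_) measurableSet_Ioi
  dsimp only; rw [← Real.exp_add]; ring_nf

/-- Each boundary point of an attractor fibre admits a unique supporting unit normal. -/
theorem attractor_boundary_unique_normal
    (d : ℕ) (hd : 1 ≤ d)
    (L : ℝ → (Euc d →L[ℝ] Euc d)) (hL : Continuous L)
    (Ψ : ℝ → ℝ → (Euc d →L[ℝ] Euc d))
    (hΨc : Continuous fun p : ℝ × ℝ => Ψ p.1 p.2)
    (hΨid : ∀ t : ℝ, Ψ t t = ContinuousLinearMap.id ℝ (Euc d))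
    (hΨcoc : ∀ t s r : ℝ, (Ψ t s).comp (Ψ s r) = Ψ t r)
    (hΨd : ∀ (s : ℝ) (x : Euc d) (t : ℝ), HasDerivAt (fun τ => Ψ τ s x) (L t (Ψ t s x)) t)
    (K γ : ℝ) (hK : 1 ≤ K) (hγ : 0 < γ)
    (hstab : ∀ s t : ℝ, s ≤ t → ‖Ψ t s‖ ≤ K * Real.exp (-γ * (t - s)))
    (ρ : ℝ) (hρ : 0 < ρ) :
    ∀ t : ℝ, ∀ p ∈ frontier (Afib d Ψ ρ t),
      ∃! n : Euc d, ‖n‖ = 1 ∧ ∀ y ∈ Afib d Ψ ρ t, ⟪n, y⟫ ≤ ⟪n, p⟫ := by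
  intro t p hp
  classical
  -- basic continuity facts
  have hΨt : Continuous fun s : ℝ => Ψ t s :=
    hΨc.comp (continuous_const.prodMk continuous_id)
  have hΨs : Continuous fun s : ℝ => Ψ s t :=
    hΨc.comp (continuous_id.prodMk continuous_const)
  -- the adjoint trajectory
  set v : Euc d → ℝ → Euc d :=
    fun n s => ContinuousLinearMap.adjoint (Ψ t s) n with hvdef
  have hvcont : ∀ n, Continuous (v n) := fun n =>
    (((ContinuousLinearMap.adjoint :
        (Euc d →L[ℝ] Euc d) ≃ₗᵢ⋆[ℝ] (Euc d →L[ℝ] Euc d)).continuous.comp hΨt).clm_apply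
      continuous_const)
  have hvadd : ∀ n₁ n₂ s, v (n₁ + n₂) s = v n₁ s + v n₂ s := fun n₁ n₂ s => by
    simp [hvdef]
  -- the exponential dominating function
  have hexp : IntegrableOn (fun s => K * Real.exp (-γ * (t - s))) (Iic t) :=
    (expIic γ t hγ).const_mul K
  -- pointwise norm bound on the adjoint trajectory
  have hvnorm : ∀ n : Euc d, ∀ s ∈ Iic t, ‖v n s‖ ≤ K * Real.exp (-γ * (t - s)) * ‖n‖ := by
    intro n s hs
    calc ‖v n s‖ ≤ ‖ContinuousLinearMap.adjoint (Ψ t s)‖ * ‖n‖ :=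
          (ContinuousLinearMap.adjoint (Ψ t s)).le_opNorm n
      _ = ‖Ψ t s‖ * ‖n‖ := by
          rw [(ContinuousLinearMap.adjoint :
            (Euc d →L[ℝ] Euc d) ≃ₗᵢ⋆[ℝ] (Euc d →L[ℝ] Euc d)).norm_map]
      _ ≤ K * Real.exp (-γ * (t - s)) * ‖n‖ :=
          mul_le_mul_of_nonneg_right (hstab s t hs) (norm_nonneg n)
  -- integrability of the adjoint norm
  have hv_int : ∀ n : Euc d, IntegrableOn (fun s => ‖v n s‖) (Iic t) := by
    intro n
    refine Integrable.mono' (hexp.mul_const ‖n‖) ((hvcont n).norm.aestronglyMeasurable) ?_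
    filter_upwards [ae_restrict_mem measurableSet_Iic] with s hs
    simpa [abs_of_nonneg (norm_nonneg (v n s))] using hvnorm n s hs
  -- integrability of controlled trajectories
  have hint : ∀ ξ : ℝ → Euc d, Measurable ξ → (∀ s, ‖ξ s‖ ≤ 1) →
      IntegrableOn (fun s => Ψ t s (ξ s)) (Iic t) := by
    intro ξ hξm hξb
    have hmeas : Measurable fun s => Ψ t s (ξ s) :=
      isBoundedBilinearMap_apply.continuous.measurable.comp (hΨt.measurable.prodMk hξm)
    refine Integrable.mono' hexp hmeas.aestronglyMeasurable ?_
    filter_upwards [ae_restrict_mem measurableSet_Iic] with s hs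
    calc ‖Ψ t s (ξ s)‖ ≤ ‖Ψ t s‖ * ‖ξ s‖ := (Ψ t s).le_opNorm (ξ s)
      _ ≤ (K * Real.exp (-γ * (t - s))) * 1 :=
          mul_le_mul (hstab s t hs) (hξb s) (norm_nonneg _)
            (le_trans (norm_nonneg _) (hstab s t hs))
      _ = K * Real.exp (-γ * (t - s)) := mul_one _
  -- the support function bound
  have hF5 : ∀ n : Euc d, ∀ y ∈ Afib d Ψ ρ t, ⟪n, y⟫ ≤ ρ * ∫ s in Iic t, ‖v n s‖ := by
    rintro n y ⟨ξ, ⟨hξm, hξb⟩, rfl⟩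
    rw [real_inner_smul_right, ← integral_inner (hint ξ hξm hξb) n]
    refine mul_le_mul_of_nonneg_left ?_ hρ.le
    have hil : IntegrableOn (fun s => ⟪n, Ψ t s (ξ s)⟫) (Iic t) :=
      (innerSL ℝ n).integrable_comp (hint ξ hξm hξb)
    refine setIntegral_mono_on hil (hv_int n) measurableSet_Iic ?_
    intro s _
    have : ⟪n, Ψ t s (ξ s)⟫ = ⟪v n s, ξ s⟫ :=
      (ContinuousLinearMap.adjoint_inner_left (Ψ t s) (ξ s) n).symm
    rw [this]
    calc ⟪v n s, ξ s⟫ ≤ ‖v n s‖ * ‖ξ s‖ := real_inner_le_norm _ _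
      _ ≤ ‖v n s‖ * 1 := mul_le_mul_of_nonneg_left (hξb s) (norm_nonneg _)
      _ = ‖v n s‖ := mul_one _
  -- extension of the bound to the closure
  have hF5c : ∀ n : Euc d, ∀ q ∈ closure (Afib d Ψ ρ t),
      ⟪n, q⟫ ≤ ρ * ∫ s in Iic t, ‖v n s‖ := by
    intro n q hq
    have hcl : IsClosed {z : Euc d | ⟪n, z⟫ ≤ ρ * ∫ s in Iic t, ‖v n s‖} :=
      isClosed_le (continuous_const.inner continuous_id) continuous_const
    exact closure_minimal (fun y hy => hF5 n y hy) hcl hq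
  -- nonvanishing of the adjoint trajectory
  have hΨinv : ∀ s, ∀ x : Euc d, Ψ t s (Ψ s t x) = x := by
    intro s x
    have h1 : (Ψ t s).comp (Ψ s t) = Ψ t t := hΨcoc t s t
    rw [hΨid t] at h1
    calc Ψ t s (Ψ s t x) = ((Ψ t s).comp (Ψ s t)) x := rfl
      _ = x := by rw [h1]; rfl
  have hv_ne : ∀ n : Euc d, n ≠ 0 → ∀ s, v n s ≠ 0 := by
    intro n hn s hzero
    have h1 : ⟪v n s, Ψ s t n⟫ = ⟪n, Ψ t s (Ψ s t n)⟫ :=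
      ContinuousLinearMap.adjoint_inner_left (Ψ t s) (Ψ s t n) n
    rw [hΨinv s n, hzero, inner_zero_left] at h1
    exact hn (inner_self_eq_zero.mp h1.symm)
  -- attainment of the support function
  have hF4 : ∀ n : Euc d, n ≠ 0 → ∃ y ∈ Afib d Ψ ρ t,
      ⟪n, y⟫ = ρ * ∫ s in Iic t, ‖v n s‖ := by
    intro n hn
    set ξ : ℝ → Euc d := fun s => (‖v n s‖)⁻¹ • v n s with hξdef
    have hξc : Continuous ξ :=
      ((hvcont n).norm.inv₀ (fun s => norm_ne_zero_iff.mpr (hv_ne n hn s))).smul (hvcont n)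
    have hξb : ∀ s, ‖ξ s‖ ≤ 1 := by
      intro s
      simp only [hξdef, norm_smul, norm_inv, norm_norm]
      rw [inv_mul_cancel₀ (norm_ne_zero_iff.mpr (hv_ne n hn s))]
    refine ⟨ρ • ∫ s in Iic t, Ψ t s (ξ s), ⟨ξ, ⟨hξc.measurable, hξb⟩, rfl⟩, ?_⟩
    rw [real_inner_smul_right, ← integral_inner (hint ξ hξc.measurable hξb) n]
    congr 1
    refine setIntegral_congr_fun measurableSet_Iic (fun s _ => ?_)
    have h1 : ⟪n, Ψ t s (ξ s)⟫ = ⟪v n s, ξ s⟫ :=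
      (ContinuousLinearMap.adjoint_inner_left (Ψ t s) (ξ s) n).symm
    rw [h1]
    simp only [hξdef, real_inner_smul_right, real_inner_self_eq_norm_mul_norm]
    rw [← mul_assoc, inv_mul_cancel₀ (norm_ne_zero_iff.mpr (hv_ne n hn s)), one_mul]
  -- convexity
  have hconv : Convex ℝ (Afib d Ψ ρ t) := by
    rintro y₁ ⟨ξ₁, ⟨hm₁, hb₁⟩, rfl⟩ y₂ ⟨ξ₂, ⟨hm₂, hb₂⟩, rfl⟩ a b ha hb hab
    refine ⟨fun s => a • ξ₁ s + b • ξ₂ s,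
      ⟨((hm₁.const_smul a).add (hm₂.const_smul b)), fun s => ?_⟩, ?_⟩
    · calc ‖a • ξ₁ s + b • ξ₂ s‖ ≤ ‖a • ξ₁ s‖ + ‖b • ξ₂ s‖ := norm_add_le _ _
        _ = a * ‖ξ₁ s‖ + b * ‖ξ₂ s‖ := by
            rw [norm_smul, norm_smul, Real.norm_of_nonneg ha, Real.norm_of_nonneg hb]
        _ ≤ a * 1 + b * 1 := by
            gcongr
            exacts [hb₁ s, hb₂ s]
        _ = 1 := by rw [mul_one, mul_one, hab]
    · have heq : ∀ s, Ψ t s (a • ξ₁ s + b • ξ₂ s)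
          = a • Ψ t s (ξ₁ s) + b • Ψ t s (ξ₂ s) := fun s => by
        rw [map_add, (Ψ t s).map_smul, (Ψ t s).map_smul]
      rw [integral_congr_ae (ae_of_all _ fun s => heq s)]
      have ha1 : Integrable (fun s => a • Ψ t s (ξ₁ s)) (volume.restrict (Iic t)) :=
        (hint ξ₁ hm₁ hb₁).smul a
      have hb1 : Integrable (fun s => b • Ψ t s (ξ₂ s)) (volume.restrict (Iic t)) :=
        (hint ξ₂ hm₂ hb₂).smul b
      rw [integral_add ha1 hb1, integral_smul, integral_smul, smul_add]
      rw [smul_comm ρ a, smul_comm ρ b]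
  -- a ball inside the attractor fibre
  obtain ⟨M₀, hM₀⟩ := (isCompact_Icc (a := t - 1) (b := t)).exists_bound_of_continuousOn
    (hΨs.continuousOn (s := Icc (t-1) t))
  set M : ℝ := max M₀ 1 with hMdef
  have hM1 : (1:ℝ) ≤ M := le_max_right _ _
  have hMpos : 0 < M := lt_of_lt_of_le one_pos hM1
  have hMb : ∀ s ∈ Icc (t-1) t, ‖Ψ s t‖ ≤ M := fun s hs => (hM₀ s hs).trans (le_max_left _ _)
  set r : ℝ := ρ / M with hrdef
  have hrpos : 0 < r := div_pos hρ hMpos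
  have hball : ∀ x : Euc d, ‖x‖ ≤ r → x ∈ Afib d Ψ ρ t := by
    intro x hx
    set ξ : ℝ → Euc d := fun s =>
      Set.indicator (Icc (t-1) t) (fun s => ρ⁻¹ • Ψ s t x) s with hξdef
    have hξm : Measurable ξ :=
      Measurable.indicator ((hΨs.clm_apply continuous_const).measurable.const_smul ρ⁻¹)
        measurableSet_Icc
    have hξb : ∀ s, ‖ξ s‖ ≤ 1 := by
      intro s
      by_cases hs : s ∈ Icc (t-1) t
      · simp only [hξdef, Set.indicator_of_mem hs]
        rw [norm_smul, norm_inv, Real.norm_of_nonneg hρ.le]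
        have h1 : ‖Ψ s t x‖ ≤ M * r := by
          calc ‖Ψ s t x‖ ≤ ‖Ψ s t‖ * ‖x‖ := (Ψ s t).le_opNorm x
            _ ≤ M * r := mul_le_mul (hMb s hs) hx (norm_nonneg x) hMpos.le
        calc ρ⁻¹ * ‖Ψ s t x‖ ≤ ρ⁻¹ * (M * r) := by gcongr
          _ = 1 := by
              rw [hrdef]; field_simp
      · simp only [hξdef, Set.indicator_of_notMem hs, norm_zero]; exact zero_le_one
    refine ⟨ξ, ⟨hξm, hξb⟩, ?_⟩
    have heq : (fun s => Ψ t s (ξ s))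
        = Set.indicator (Icc (t-1) t) (fun _ => ρ⁻¹ • x) := by
      funext s
      by_cases hs : s ∈ Icc (t-1) t
      · simp only [hξdef, Set.indicator_of_mem hs]
        rw [(Ψ t s).map_smul, hΨinv s x]
      · simp only [hξdef, Set.indicator_of_notMem hs, map_zero]
    rw [heq, setIntegral_indicator measurableSet_Icc]
    have hIcc : Iic t ∩ Icc (t-1) t = Icc (t-1) t :=
      inter_eq_right.mpr (fun s hs => hs.2)
    rw [hIcc, setIntegral_const, Real.volume_real_Icc_of_le (by linarith)]
    have : (t - (t-1)) = 1 := by ring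
    rw [this, one_smul, smul_smul,
      mul_inv_cancel₀ hρ.ne', one_smul]
  have h0int : (0 : Euc d) ∈ interior (Afib d Ψ ρ t) := by
    refine mem_interior.mpr ⟨ball 0 r, fun z hz => hball z ?_, isOpen_ball, mem_ball_self hrpos⟩
    exact le_of_lt (mem_ball_zero_iff.mp hz)
  have hpc : p ∈ closure (Afib d Ψ ρ t) := hp.1
  have hpni : p ∉ interior (Afib d Ψ ρ t) := hp.2
  -- key support-value identity: any supporting unit normal attains the support function at p
  have hkey : ∀ n : Euc d, ‖n‖ = 1 → (∀ y ∈ Afib d Ψ ρ t, ⟪n, y⟫ ≤ ⟪n, p⟫) →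
      ⟪n, p⟫ = ρ * ∫ s in Iic t, ‖v n s‖ := by
    intro n hn hsupp
    have hne : n ≠ 0 := fun h => by simp [h] at hn
    obtain ⟨y, hy, hyv⟩ := hF4 n hne
    exact le_antisymm (hF5c n p hpc) (hyv ▸ hsupp y hy)
  -- uniqueness of supporting unit normals
  have huniq : ∀ n₁ n₂ : Euc d, ‖n₁‖ = 1 → ‖n₂‖ = 1 →
      (∀ y ∈ Afib d Ψ ρ t, ⟪n₁, y⟫ ≤ ⟪n₁, p⟫) →
      (∀ y ∈ Afib d Ψ ρ t, ⟪n₂, y⟫ ≤ ⟪n₂, p⟫) → n₁ = n₂ := by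
    intro n₁ n₂ hn₁ hn₂ hs₁ hs₂
    have h1 := hkey n₁ hn₁ hs₁
    have h2 := hkey n₂ hn₂ hs₂
    have h12 : ⟪n₁ + n₂, p⟫ ≤ ρ * ∫ s in Iic t, ‖v (n₁ + n₂) s‖ := hF5c (n₁ + n₂) p hpc
    rw [inner_add_left, h1, h2] at h12
    -- the deficit function
    set G : ℝ → ℝ := fun s => ‖v n₁ s‖ + ‖v n₂ s‖ - ‖v (n₁ + n₂) s‖ with hGdef
    have hGcont : Continuous G :=
      (((hvcont n₁).norm.add (hvcont n₂).norm).sub (hvcont (n₁ + n₂)).norm)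
    have hGnonneg : ∀ s, 0 ≤ G s := by
      intro s
      rw [hGdef]
      simp only [hvadd]
      linarith [norm_add_le (v n₁ s) (v n₂ s)]
    have hGint : IntegrableOn G (Iic t) :=
      ((hv_int n₁).add (hv_int n₂)).sub (hv_int (n₁ + n₂))
    have hGzero : ∫ s in Iic t, G s ≤ 0 := by
      have : ∫ s in Iic t, G s
          = (∫ s in Iic t, (‖v n₁ s‖ + ‖v n₂ s‖)) - ∫ s in Iic t, ‖v (n₁ + n₂) s‖ :=
        integral_sub ((hv_int n₁).add (hv_int n₂)) (hv_int (n₁ + n₂))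
      rw [this, integral_add (hv_int n₁) (hv_int n₂)]
      have h3 : (∫ s in Iic t, ‖v n₁ s‖) + ∫ s in Iic t, ‖v n₂ s‖
          ≤ ∫ s in Iic t, ‖v (n₁ + n₂) s‖ := by
        refine le_of_mul_le_mul_left ?_ hρ
        rw [mul_add]
        exact h12
      linarith
    -- hence G vanishes; in particular at s = t
    have hGt : G t = 0 := by
      by_contra hne
      have hGtpos : 0 < G t := lt_of_le_of_ne (hGnonneg t) (Ne.symm hne)
      obtain ⟨ε, hε, hball2⟩ := Metric.isOpen_iff.mp (isOpen_lt continuous_const hGcont) t hGtpos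
      have hsub : Ioc (t - ε) t ⊆ Function.support G ∩ Iic t := by
        intro s hs
        constructor
        · obtain ⟨hs1, hs2⟩ := hs
          have hsball : s ∈ ball t ε := by
            rw [mem_ball, Real.dist_eq, abs_lt]
            constructor <;> linarith
          exact ne_of_gt (hball2 hsball)
        · exact hs.2
      have hpos : 0 < volume (Function.support G ∩ Iic t) := by
        refine lt_of_lt_of_le ?_ (measure_mono hsub)
        rw [Real.volume_Ioc]
        simp only [ENNReal.ofReal_pos]
        linarith
      have := (setIntegral_pos_iff_support_of_nonneg_ae
        (ae_of_all _ hGnonneg : (0:ℝ → ℝ) ≤ᵐ[volume.restrict (Iic t)] G) hGint).mpr hpos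
      linarith
    -- conclude
    have hvt : ∀ n : Euc d, v n t = n := by
      intro n
      show ContinuousLinearMap.adjoint (Ψ t t) n = n
      rw [hΨid t, ContinuousLinearMap.adjoint_id]
      rfl
    rw [hGdef] at hGt
    simp only [hvt] at hGt
    have hsum : ‖n₁ + n₂‖ = ‖n₁‖ + ‖n₂‖ := by linarith
    exact eq_of_norm_eq_of_norm_add_eq (hn₁.trans hn₂.symm) hsum
  -- existence of a supporting unit normal
  obtain ⟨f, hf⟩ := geometric_hahn_banach_open_point (hconv.interior) isOpen_interior hpni
  set n₀ : Euc d := (InnerProductSpace.toDual ℝ (Euc d)).symm f with hn₀def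
  have hfn₀ : ∀ z : Euc d, ⟪n₀, z⟫ = f z := fun z => InnerProductSpace.toDual_symm_apply
  have hfp_pos : 0 < f p := by
    have := hf 0 h0int
    simpa using this
  have hn₀ne : n₀ ≠ 0 := by
    intro h
    have : (0:ℝ) = f p := by rw [← hfn₀ p, h, inner_zero_left]
    linarith
  -- supporting property of n₀ over the whole fibre
  have hsupp₀ : ∀ y ∈ Afib d Ψ ρ t, ⟪n₀, y⟫ ≤ ⟪n₀, p⟫ := by
    intro y hy
    rw [hfn₀, hfn₀]
    -- limit argument along the segment towards 0 ∈ interior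
    have hev : ∀ᶠ θ in nhdsWithin (0:ℝ) (Ioi 0), (1 - θ) * f y ≤ f p := by
      have hmem : Iio (1:ℝ) ∈ nhdsWithin (0:ℝ) (Ioi 0) :=
        nhdsWithin_le_nhds (Iio_mem_nhds one_pos)
      filter_upwards [hmem, self_mem_nhdsWithin] with θ hθ1 hθ0
      have hθpos : 0 < θ := hθ0
      have hθlt : θ < 1 := hθ1
      have hcombo : (1 - θ) • y + θ • (0:Euc d) ∈ interior (Afib d Ψ ρ t) :=
        hconv.combo_self_interior_mem_interior hy h0int (by linarith) hθpos (by ring)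
      have h4 := hf _ hcombo
      rw [map_add, f.map_smul, f.map_smul] at h4
      simp only [smul_eq_mul, map_zero, mul_zero, add_zero] at h4
      linarith
    have htend : Filter.Tendsto (fun θ : ℝ => (1 - θ) * f y)
        (nhdsWithin (0:ℝ) (Ioi 0)) (nhds ((1 - 0) * f y)) :=
      (Filter.Tendsto.mono_left (((continuous_const.sub continuous_id).mul
        continuous_const).tendsto 0) nhdsWithin_le_nhds)
    have := le_of_tendsto htend hev
    simpa using this
  refine ⟨‖n₀‖⁻¹ • n₀, ⟨?_, ?_⟩, ?_⟩
  · rw [norm_smul, norm_inv, norm_norm, inv_mul_cancel₀ (norm_ne_zero_iff.mpr hn₀ne)]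
  · intro y hy
    rw [real_inner_smul_left, real_inner_smul_left]
    exact mul_le_mul_of_nonneg_left (hsupp₀ y hy) (inv_nonneg.mpr (norm_nonneg n₀))
  · rintro m ⟨hm1, hmsupp⟩
    refine huniq m (‖n₀‖⁻¹ • n₀) hm1 ?_ hmsupp ?_
    · rw [norm_smul, norm_inv, norm_norm, inv_mul_cancel₀ (norm_ne_zero_iff.mpr hn₀ne)]
    · intro y hy
      rw [real_inner_smul_left, real_inner_smul_left]
      exact mul_le_mul_of_nonneg_left (hsupp₀ y hy) (inv_nonneg.mpr (norm_nonneg n₀))
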